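/- Let E be an invertible n×n matrix over ℚ, D an invertible diagonal matrix, Θ = [[−D^{-1}E, −D^{-1}Eᵀ],[Iₙ, 0]], Γ = [[Eᵀ−E, −Eᵀ−E],[Eᵀ+E, Eᵀ−E]], B̃ = (D^{-1}(Eᵀ−E); Iₙ), and Λ₀ = (Θ^{-1})ᵀ Γ Θ^{-1}. Then B̃ᵀ Λ₀ = (2D | 0). -/

import Mathlib

open Matrix

/-- With `Θ = [[−D⁻¹E, −D⁻¹Eᵀ],[Iₙ,0]]`, `Γ = [[Eᵀ−E, −Eᵀ−E],[Eᵀ+E, Eᵀ−E]]`,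
`B̃ = (D⁻¹(Eᵀ−E); Iₙ)` and `Λ₀ = (Θ⁻¹)ᵀ Γ Θ⁻¹`, one has `B̃ᵀ Λ₀ = (2D | 0)`. -/
theorem Btilde_transpose_mul_Lambda_zero (n : ℕ) (E : Matrix (Fin n) (Fin n) ℚ)
    (hE : IsUnit E.det) (d : Fin n → ℚ) (hd : ∀ i, d i ≠ 0) :
    let D := Matrix.diagonal d
    let Θ := Matrix.fromBlocks (-(D⁻¹ * E)) (-(D⁻¹ * Eᵀ))
      (1 : Matrix (Fin n) (Fin n) ℚ) (0 : Matrix (Fin n) (Fin n) ℚ)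
    let Γ := Matrix.fromBlocks (Eᵀ - E) (-Eᵀ - E) (Eᵀ + E) (Eᵀ - E)
    let Btil := Matrix.fromRows (D⁻¹ * (Eᵀ - E)) (1 : Matrix (Fin n) (Fin n) ℚ)
    let Λ₀ := (Θ⁻¹)ᵀ * Γ * Θ⁻¹
    Btilᵀ * Λ₀ = Matrix.fromCols ((2 : ℚ) • D) (0 : Matrix (Fin n) (Fin n) ℚ) := by
  intro D Θ Γ Btil Λ₀
  have hEt : IsUnit Eᵀ.det := by rwa [Matrix.det_transpose]
  have hD : IsUnit D.det := by
    simp only [D, Matrix.det_diagonal]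
    exact (Finset.prod_ne_zero_iff.mpr fun i _ => hd i).isUnit
  -- cancellation lemmas
  have h1 : Eᵀ * Eᵀ⁻¹ = 1 := Matrix.mul_nonsing_inv _ hEt
  have h2 : Eᵀ⁻¹ * Eᵀ = 1 := Matrix.nonsing_inv_mul _ hEt
  have h3 : E * E⁻¹ = 1 := Matrix.mul_nonsing_inv _ hE
  have h4 : D * D⁻¹ = 1 := Matrix.mul_nonsing_inv _ hD
  have h5 : D⁻¹ * D = 1 := Matrix.nonsing_inv_mul _ hD
  have c1 : ∀ X : Matrix (Fin n) (Fin n) ℚ, Eᵀ * (Eᵀ⁻¹ * X) = X := fun X => by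
    rw [← mul_assoc, h1, one_mul]
  have c2 : ∀ X : Matrix (Fin n) (Fin n) ℚ, Eᵀ⁻¹ * (Eᵀ * X) = X := fun X => by
    rw [← mul_assoc, h2, one_mul]
  have c3 : ∀ X : Matrix (Fin n) (Fin n) ℚ, E * (E⁻¹ * X) = X := fun X => by
    rw [← mul_assoc, h3, one_mul]
  have c4 : ∀ X : Matrix (Fin n) (Fin n) ℚ, D * (D⁻¹ * X) = X := fun X => by
    rw [← mul_assoc, h4, one_mul]
  have c5 : ∀ X : Matrix (Fin n) (Fin n) ℚ, D⁻¹ * (D * X) = X := fun X => by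
    rw [← mul_assoc, h5, one_mul]
  -- explicit inverse of Θ
  set M : Matrix (Fin n ⊕ Fin n) (Fin n ⊕ Fin n) ℚ :=
    Matrix.fromBlocks 0 1 (-(Eᵀ⁻¹ * D)) (-(Eᵀ⁻¹ * E)) with hM
  have hΘM : Θ * M = 1 := by
    simp only [Θ, hM, Matrix.fromBlocks_multiply]
    rw [← Matrix.fromBlocks_one]
    congr 1 <;>
      simp [Matrix.mul_assoc, c1, c2, c3, c4, c5, h1, h2, h3, h4, h5, Matrix.mul_sub,
        Matrix.sub_mul]
  have hΘinv : Θ⁻¹ = M := Matrix.inv_eq_right_inv hΘM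
  have hDt : Dᵀ = D := Matrix.diagonal_transpose d
  have hDinvT : (D⁻¹)ᵀ = D⁻¹ := by
    rw [Matrix.transpose_nonsing_inv, hDt]
  have hEtInvT : (Eᵀ⁻¹)ᵀ = E⁻¹ := by
    rw [Matrix.transpose_nonsing_inv, Matrix.transpose_transpose]
  -- transpose of M
  have hMT : Mᵀ = Matrix.fromBlocks 0 (-(D * E⁻¹)) 1 (-(Eᵀ * E⁻¹)) := by
    rw [hM, Matrix.fromBlocks_transpose]
    simp [Matrix.transpose_mul, hDinvT, hEtInvT, hDt]
  -- transpose of Btil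
  have hBT : Btilᵀ = Matrix.fromCols ((E - Eᵀ) * D⁻¹) 1 := by
    simp [Btil, Matrix.transpose_fromRows, Matrix.transpose_mul, hDinvT, Matrix.transpose_sub]
  -- step 1 : Btilᵀ * Mᵀ = (1 | -1)
  have e1 : (E - Eᵀ) * D⁻¹ * 0 + 1 * 1 = (1 : Matrix (Fin n) (Fin n) ℚ) := by simp
  have e2 : (E - Eᵀ) * D⁻¹ * -(D * E⁻¹) + 1 * -(Eᵀ * E⁻¹)
      = (-1 : Matrix (Fin n) (Fin n) ℚ) := by
    rw [Matrix.mul_neg, Matrix.mul_assoc ((E - Eᵀ)) D⁻¹, c5, Matrix.one_mul, Matrix.sub_mul, h3]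
    abel
  have step1 : Btilᵀ * Mᵀ = Matrix.fromCols 1 (-1) := by
    rw [hBT, hMT, Matrix.fromCols_mul_fromBlocks, e1, e2]
  -- step 2 : (1 | -1) * Γ = (-2E | -2Eᵀ)
  have step2 : (Matrix.fromCols 1 (-1) : Matrix (Fin n) (Fin n ⊕ Fin n) ℚ) * Γ
      = Matrix.fromCols (-((2 : ℚ) • E)) (-((2 : ℚ) • Eᵀ)) := by
    have e3 : (1 : Matrix (Fin n) (Fin n) ℚ) * (Eᵀ - E) + -1 * (Eᵀ + E) = -((2 : ℚ) • E) := by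
      simp only [Matrix.one_mul, Matrix.neg_mul, two_smul]
      abel
    have e4 : (1 : Matrix (Fin n) (Fin n) ℚ) * (-Eᵀ - E) + -1 * (Eᵀ - E) = -((2 : ℚ) • Eᵀ) := by
      simp only [Matrix.one_mul, Matrix.neg_mul, two_smul]
      abel
    rw [Matrix.fromCols_mul_fromBlocks, e3, e4]
  -- step 3 : (-2E | -2Eᵀ) * M = (2D | 0)
  have step3 : Matrix.fromCols (-((2 : ℚ) • E)) (-((2 : ℚ) • Eᵀ)) * M
      = Matrix.fromCols ((2 : ℚ) • D) 0 := by
    have e5 : -((2 : ℚ) • E) * 0 + -((2 : ℚ) • Eᵀ) * -(Eᵀ⁻¹ * D) = (2 : ℚ) • D := by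
      simp [Matrix.smul_mul, Matrix.mul_assoc, c1]
    have e6 : -((2 : ℚ) • E) * 1 + -((2 : ℚ) • Eᵀ) * -(Eᵀ⁻¹ * E)
        = (0 : Matrix (Fin n) (Fin n) ℚ) := by
      simp [Matrix.smul_mul, Matrix.mul_assoc, c1]
    rw [hM, Matrix.fromCols_mul_fromBlocks, e5, e6]
  calc Btilᵀ * Λ₀ = (Btilᵀ * Mᵀ) * Γ * M := by
        simp only [Λ₀, hΘinv, Matrix.transpose_mul, Matrix.mul_assoc]
      _ = Matrix.fromCols ((2 : ℚ) • D) 0 := by rw [step1, step2, step3]
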